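/- For every integer n ≥ 1, the subgroup O(Σ_n)* has index exactly 2^{ω(n)} in O(Σ_n); equivalently, the natural map from O(Σ_n) to the orthogonal group of the discriminant quadratic form of U ⊕ ⟨2n⟩ is surjective with image of order 2^{ω(n)}. -/

import Mathlib

open Matrix

abbrev M3 := Matrix (Fin 3) (Fin 3) ℤ

/-- The Gram matrix `Σ_n` of the lattice `U ⊕ ⟨2n⟩` in the basis `(e,v,f)`. -/
def gram (n : ℕ) : M3 := !![0, 0, -1; 0, 2 * (n : ℤ), 0; -1, 0, 0]

/-- The isometry group `O(Σ_n) = {M ∈ GL₃(ℤ) : ᵗM·Σ_n·M = Σ_n}`. -/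
def Oform (n : ℕ) : Subgroup (M3)ˣ where
  carrier := {M | (M : M3)ᵀ * gram n * (M : M3) = gram n}
  one_mem' := by simp
  mul_mem' := by
    intro a b ha hb
    simp only [Set.mem_setOf_eq, Units.val_mul, transpose_mul] at *
    calc (b : M3)ᵀ * (a : M3)ᵀ * gram n * ((a : M3) * (b : M3))
        = (b : M3)ᵀ * ((a : M3)ᵀ * gram n * (a : M3)) * (b : M3) := by noncomm_ring
      _ = gram n := by rw [ha]; exact hb
  inv_mem' := by
    intro a ha
    simp only [Set.mem_setOf_eq] at *
    have h1 : ((a⁻¹ : (M3)ˣ) : M3)ᵀ * (a : M3)ᵀ = 1 := by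
      rw [← transpose_mul]; simp
    have h2 : (a : M3) * ((a⁻¹ : (M3)ˣ) : M3) = 1 := by simp
    calc ((a⁻¹ : (M3)ˣ) : M3)ᵀ * gram n * ((a⁻¹ : (M3)ˣ) : M3)
        = ((a⁻¹ : (M3)ˣ) : M3)ᵀ * ((a : M3)ᵀ * gram n * (a : M3)) * ((a⁻¹ : (M3)ˣ) : M3) := by
          rw [ha]
      _ = (((a⁻¹ : (M3)ˣ) : M3)ᵀ * (a : M3)ᵀ) * gram n * ((a : M3) * ((a⁻¹ : (M3)ˣ) : M3)) := by
          noncomm_ring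
      _ = gram n := by rw [h1, h2, one_mul, mul_one]

/-- Entrywise reduction mod `2n` of an integer `3×3` matrix. -/
def redmod (n : ℕ) : M3 →+* Matrix (Fin 3) (Fin 3) (ZMod (2 * n)) :=
  (Int.castRingHom (ZMod (2 * n))).mapMatrix

/-- The congruence condition cutting out `O(Σ_n)*`: the second column of `M`
is congruent to `(0,1,0)ᵗ` mod `2n`, i.e. `M` induces the identity on the
discriminant group `ℤ/2nℤ`.  (`O(Σ_n)* = Oform n ⊓ starSub n`; note that this
subgroup of `GL₃(ℤ)` is defined without reference to the form.) -/
def starSub (n : ℕ) : Subgroup (M3)ˣ where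
  carrier := {M | redmod n (M : M3) *ᵥ ![0, 1, 0] = ![0, 1, 0]}
  one_mem' := by simp
  mul_mem' := by
    intro a b ha hb
    simp only [Set.mem_setOf_eq, Units.val_mul, _root_.map_mul] at *
    rw [← Matrix.mulVec_mulVec, hb, ha]
  inv_mem' := by
    intro a ha
    simp only [Set.mem_setOf_eq] at *
    have h : redmod n ((a⁻¹ : (M3)ˣ) : M3) * redmod n (a : M3) = 1 := by
      rw [← _root_.map_mul]; simp
    conv_lhs => rw [← ha]
    rw [Matrix.mulVec_mulVec, h, Matrix.one_mulVec]

namespace Stmt6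

/-- key relation: for `M ∈ Oform n`, `gram n * M = (M⁻¹)ᵀ * gram n`. -/
lemma gram_mul {n : ℕ} {M : (M3)ˣ} (hM : M ∈ Oform n) :
    gram n * M.val = ((M⁻¹).val)ᵀ * gram n := by
  have hM' : (M.val)ᵀ * gram n * M.val = gram n := hM
  have h1 : ((M⁻¹).val)ᵀ * ((M.val)ᵀ * gram n * M.val) = ((M⁻¹).val)ᵀ * gram n := by
    rw [hM']
  have h2 : ((M⁻¹).val)ᵀ * (M.val)ᵀ = 1 := by
    rw [← Matrix.transpose_mul]
    simp
  calc gram n * M.val = (((M⁻¹).val)ᵀ * (M.val)ᵀ) * gram n * M.val := by rw [h2, one_mul]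
    _ = ((M⁻¹).val)ᵀ * ((M.val)ᵀ * gram n * M.val) := by noncomm_ring
    _ = ((M⁻¹).val)ᵀ * gram n := h1

lemma entry01 {n : ℕ} {M : (M3)ˣ} (hM : M ∈ Oform n) :
    ∃ k : ℤ, M.val 0 1 = 2 * (n : ℤ) * k := by
  have h := congrFun (congrFun (gram_mul hM) 2) 1
  simp [_root_.gram, Matrix.mul_apply, Fin.sum_univ_three] at h
  exact ⟨-((M.val)⁻¹ 1 2), by linarith⟩

lemma entry21 {n : ℕ} {M : (M3)ˣ} (hM : M ∈ Oform n) :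
    ∃ k : ℤ, M.val 2 1 = 2 * (n : ℤ) * k := by
  have h := congrFun (congrFun (gram_mul hM) 0) 1
  simp [_root_.gram, Matrix.mul_apply, Fin.sum_univ_three] at h
  exact ⟨-((M.val)⁻¹ 1 0), by linarith⟩

end Stmt6
namespace Stmt6
lemma sq11 {n : ℕ} (hn : n ≠ 0) {M : (M3)ˣ} (hM : M ∈ Oform n) :
    ∃ k : ℤ, (M.val 1 1) ^ 2 = 1 + 4 * (n : ℤ) * k := by
  have hM' : (M.val)ᵀ * gram n * M.val = gram n := hM
  have h := congrFun (congrFun hM' 1) 1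
  simp [_root_.gram, Matrix.mul_apply, Fin.sum_univ_three] at h
  obtain ⟨a, ha⟩ := entry01 hM
  obtain ⟨c, hc⟩ := entry21 hM
  refine ⟨a * c, ?_⟩
  have h2n : (2 * (n:ℤ)) ≠ 0 := by positivity
  apply mul_left_cancel₀ h2n
  rw [ha, hc] at h
  ring_nf
  ring_nf at h
  linarith

/-- the middle entry mod `2n`. -/
def psi (n : ℕ) (A : M3) : ZMod (2*n) := ((A 1 1 : ℤ) : ZMod (2*n))

lemma cast2n (n : ℕ) (k : ℤ) : ((2 * (n:ℤ) * k : ℤ) : ZMod (2*n)) = 0 := by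
  have h : ((2 * (n:ℤ) : ℤ) : ZMod (2*n)) = 0 := by
    have := ZMod.natCast_self (2*n)
    exact_mod_cast this
  rw [Int.cast_mul, h, zero_mul]

lemma psi_mul {n : ℕ} {A B : (M3)ˣ} (hA : A ∈ Oform n) (hB : B ∈ Oform n) :
    psi n (A*B).val = psi n A.val * psi n B.val := by
  obtain ⟨a, ha⟩ := entry01 hB
  obtain ⟨c, hc⟩ := entry21 hB
  have : (A*B).val 1 1 = A.val 1 0 * B.val 0 1 + A.val 1 1 * B.val 1 1
      + A.val 1 2 * B.val 2 1 := by
    simp [Matrix.mul_apply, Fin.sum_univ_three]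
  unfold psi
  rw [this, ha, hc]
  push_cast
  rw [show ((2:ZMod (2*n)) * (n:ZMod (2*n)) * (a:ZMod (2*n))) = ((2 * (n:ℤ) * a : ℤ) : ZMod (2*n)) by push_cast; ring]
  rw [show ((2:ZMod (2*n)) * (n:ZMod (2*n)) * (c:ZMod (2*n))) = ((2 * (n:ℤ) * c : ℤ) : ZMod (2*n)) by push_cast; ring]
  rw [cast2n, cast2n]
  ring
end Stmt6
namespace Stmt6

lemma psi_one (n : ℕ) : psi n (1 : M3) = 1 := by simp [psi]

/-- the homomorphism `O(Σ_n) → (ℤ/2n)ˣ` given by the middle entry. -/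
noncomputable def phi (n : ℕ) : (Oform n) →* (ZMod (2*n))ˣ where
  toFun M := ⟨psi n M.val.val, psi n (M⁻¹).val.val,
    by rw [← psi_mul M.2 (M⁻¹).2]; simp [psi_one],
    by rw [← psi_mul (M⁻¹).2 M.2]; simp [psi_one]⟩
  map_one' := by ext; exact psi_one n
  map_mul' A B := by ext; exact psi_mul A.2 B.2

lemma phi_val {n : ℕ} (M : Oform n) : ((phi n M : (ZMod (2*n))ˣ) : ZMod (2*n)) = psi n M.val.val := rfl

lemma starSub_iff {n : ℕ} {M : (M3)ˣ} (hM : M ∈ Oform n) :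
    M ∈ starSub n ↔ psi n M.val = 1 := by
  constructor
  · intro h
    have h1 := congrFun h 1
    simpa [redmod, Matrix.mulVec, dotProduct, Fin.sum_univ_three, psi] using h1
  · intro h
    have e01 := entry01 hM
    have e21 := entry21 hM
    funext i
    fin_cases i
    · obtain ⟨k, hk⟩ := e01
      simpa [redmod, Matrix.mulVec, dotProduct, Fin.sum_univ_three, hk] using cast2n n k
    · simpa [redmod, Matrix.mulVec, dotProduct, Fin.sum_univ_three, psi] using h
    · obtain ⟨k, hk⟩ := e21
      simpa [redmod, Matrix.mulVec, dotProduct, Fin.sum_univ_three, hk] using cast2n n k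

lemma ker_phi (n : ℕ) : (phi n).ker = (starSub n).subgroupOf (Oform n) := by
  ext M
  rw [MonoidHom.mem_ker, Subgroup.mem_subgroupOf, Units.ext_iff, phi_val]
  exact (starSub_iff M.2).symm

end Stmt6
namespace Stmt6

def Mmat (d e μ ν : ℤ) : M3 :=
  !![e, 2*(d*e)*μ, d*μ^2; 1, d*μ+e*ν, μ*ν; d, 2*(d*e)*ν, e*ν^2]

def Mmatinv (d e μ ν : ℤ) : M3 :=
  !![e*ν^2, -(2*(d*e)*μ*ν), d*μ^2; -ν, d*μ+e*ν, -μ; d, -(2*(d*e)), e]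

lemma Mmat_mul_inv (d e μ ν : ℤ) (hb : e*ν - d*μ = 1) :
    Mmat d e μ ν * Mmatinv d e μ ν = 1 := by
  ext i j
  fin_cases i <;> fin_cases j <;>
    simp [Mmat, Mmatinv, Matrix.mul_apply, Fin.sum_univ_three] <;>
    first
      | ring1
      | linear_combination (e*ν - d*μ + 1) * hb
      | linear_combination (-(e*ν - d*μ) - 1) * hb

lemma Mmat_inv_mul (d e μ ν : ℤ) (hb : e*ν - d*μ = 1) :
    Mmatinv d e μ ν * Mmat d e μ ν = 1 := by
  ext i j
  fin_cases i <;> fin_cases j <;>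
    simp [Mmat, Mmatinv, Matrix.mul_apply, Fin.sum_univ_three] <;>
    first
      | ring1
      | linear_combination (e*ν - d*μ + 1) * hb
      | linear_combination (-(e*ν - d*μ) - 1) * hb

def Munit (d e μ ν : ℤ) (hb : e*ν - d*μ = 1) : (M3)ˣ :=
  ⟨Mmat d e μ ν, Mmatinv d e μ ν, Mmat_mul_inv d e μ ν hb, Mmat_inv_mul d e μ ν hb⟩

lemma Munit_mem {n : ℕ} (d e μ ν : ℤ) (hb : e*ν - d*μ = 1) (hn : (n:ℤ) = d*e) :
    Munit d e μ ν hb ∈ Oform n := by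
  show (Mmat d e μ ν)ᵀ * gram n * Mmat d e μ ν = gram n
  have hg : gram n = !![0, 0, -1; 0, 2*(d*e), 0; -1, 0, 0] := by
    rw [_root_.gram, hn]
  have ht : (Mmat d e μ ν)ᵀ
      = !![e, 1, d; 2*(d*e)*μ, d*μ+e*ν, 2*(d*e)*ν; d*μ^2, μ*ν, e*ν^2] := by
    ext i j
    fin_cases i <;> fin_cases j <;> rfl
  rw [hg, ht]
  ext i j
  fin_cases i <;> fin_cases j <;>
    simp [Mmat, Matrix.mul_apply, Fin.sum_univ_three, Matrix.vecHead, Matrix.vecTail] <;>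
    first
      | ring1
      | linear_combination (-(e*ν - d*μ) - 1) * hb
      | linear_combination (e*ν - d*μ + 1) * hb
      | linear_combination (2*d*e*(e*ν - d*μ + 1)) * hb
      | linear_combination (-(2*d*e)*(e*ν - d*μ + 1)) * hb

lemma Munit_psi {n : ℕ} (d e μ ν : ℤ) (hb : e*ν - d*μ = 1) :
    psi n (Munit d e μ ν hb).val = ((d*μ + e*ν : ℤ) : ZMod (2*n)) := by
  simp [psi, Munit, Mmat]

end Stmt6
namespace Stmt6

noncomputable def bmu (n d : ℕ) : ℤ := -(Nat.gcdA d (n / d))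
noncomputable def bnu (n d : ℕ) : ℤ := Nat.gcdB d (n / d)

lemma bez {n d : ℕ} (h : Nat.Coprime d (n / d)) :
    ((n / d : ℕ) : ℤ) * bnu n d - (d : ℤ) * bmu n d = 1 := by
  have h2 := Nat.gcd_eq_gcd_ab d (n / d)
  rw [h] at h2
  simp only [bmu, bnu, Nat.cast_one] at *
  linarith

noncomputable def gint (n d : ℕ) : ℤ := (d : ℤ) * bmu n d + ((n / d : ℕ) : ℤ) * bnu n d

noncomputable def gu (n d : ℕ) : (ZMod (2 * n))ˣ :=
  if h : ((gint n d : ℤ) : ZMod (2 * n)) * ((gint n d : ℤ) : ZMod (2 * n)) = 1 then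
    ⟨_, _, h, h⟩ else 1

lemma gint_sq {n d : ℕ} (hd : d ∣ n) (h : Nat.Coprime d (n / d)) :
    ((gint n d : ℤ) : ZMod (2 * n)) * ((gint n d : ℤ) : ZMod (2 * n)) = 1 := by
  have hb := bez (n := n) (d := d) h
  have hde : (d : ℤ) * ((n / d : ℕ) : ℤ) = (n : ℤ) := by
    exact_mod_cast congrArg (Nat.cast : ℕ → ℤ) (Nat.mul_div_cancel' hd)
  have key : gint n d * gint n d = 1 + 2 * (n : ℤ) * (2 * bmu n d * bnu n d) := by
    have : gint n d * gint n d
        - (((n / d : ℕ) : ℤ) * bnu n d - (d : ℤ) * bmu n d) ^ 2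
        = 4 * ((d : ℤ) * ((n / d : ℕ) : ℤ)) * (bmu n d * bnu n d) := by
      unfold gint; ring
    rw [hb, hde] at this
    nlinarith [this]
  calc ((gint n d : ℤ) : ZMod (2 * n)) * ((gint n d : ℤ) : ZMod (2 * n))
      = ((gint n d * gint n d : ℤ) : ZMod (2 * n)) := by push_cast; ring
    _ = ((1 + 2 * (n : ℤ) * (2 * bmu n d * bnu n d) : ℤ) : ZMod (2 * n)) := by rw [key]
    _ = 1 := by push_cast [cast2n n (2 * bmu n d * bnu n d)]; ring

lemma gu_val {n d : ℕ} (hd : d ∣ n) (h : Nat.Coprime d (n / d)) :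
    ((gu n d : (ZMod (2 * n))ˣ) : ZMod (2 * n)) = ((gint n d : ℤ) : ZMod (2 * n)) := by
  rw [gu, dif_pos (gint_sq hd h)]

lemma gu_mem_range {n d : ℕ} (hd : d ∣ n) (h : Nat.Coprime d (n / d)) :
    gu n d ∈ Set.range (phi n) := by
  have hb := bez (n := n) (d := d) h
  have hn' : (n : ℤ) = (d : ℤ) * ((n / d : ℕ) : ℤ) := by
    exact_mod_cast (Nat.mul_div_cancel' hd).symm
  refine ⟨⟨Munit (d : ℤ) ((n / d : ℕ) : ℤ) (bmu n d) (bnu n d) hb,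
    Munit_mem _ _ _ _ hb hn'⟩, ?_⟩
  apply Units.ext
  rw [gu_val hd h, phi_val, Munit_psi]
  rfl

end Stmt6
namespace Stmt6

lemma int_gcd_congr {a b : ℤ} (n : ℕ) (h : (n : ℤ) ∣ a - b) : Int.gcd n a = Int.gcd n b := by
  have key : ∀ x y : ℤ, (n : ℤ) ∣ x - y → (Int.gcd n x : ℤ) ∣ Int.gcd n y := by
    intro x y hxy
    refine Int.dvd_coe_gcd (Int.gcd_dvd_left _ _) ?_
    have h1 : (Int.gcd n x : ℤ) ∣ x := Int.gcd_dvd_right _ _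
    have h2 : (Int.gcd n x : ℤ) ∣ x - y := dvd_trans (Int.gcd_dvd_left _ _) hxy
    have := dvd_sub h1 h2
    simpa using this
  exact Nat.dvd_antisymm (Int.natCast_dvd_natCast.mp (key a b h))
    (Int.natCast_dvd_natCast.mp (key b a (by simpa using h.neg_right)))

/-- extraction of `d` from the unit `gu n d`. -/
lemma gu_extract {n d : ℕ} (hn : n ≠ 0) (hd : d ∣ n) (h : Nat.Coprime d (n / d)) :
    n.gcd ((((gu n d : (ZMod (2 * n))ˣ) : ZMod (2 * n)).val - 1) / 2) = d := by
  haveI : NeZero (2 * n) := ⟨by omega⟩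
  set e : ℕ := n / d with he
  have hb := bez (n := n) (d := d) h
  set v : ℕ := ((gu n d : (ZMod (2 * n))ˣ) : ZMod (2 * n)).val with hv
  -- (v : ℤ) ≡ gint n d  mod 2n
  have hcast : ((v : ℤ) : ZMod (2 * n)) = ((gint n d : ℤ) : ZMod (2 * n)) := by
    rw [← gu_val hd h]
    push_cast
    simp [hv, ZMod.natCast_val, ZMod.intCast_cast, ZMod.intCast_zmod_cast]
  have hdvd : ((2 * n : ℕ) : ℤ) ∣ (v : ℤ) - gint n d := by
    rwa [← ZMod.intCast_zmod_eq_zero_iff_dvd, Int.cast_sub, sub_eq_zero]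
  -- gint n d = 2 * (d * bmu) + 1
  have hgint : gint n d = 2 * ((d : ℤ) * bmu n d) + 1 := by
    unfold gint; linarith [hb]
  -- v is odd
  have hvodd : (2 : ℤ) ∣ (v : ℤ) - 1 := by
    have h2 : (2 : ℤ) ∣ ((2 * n : ℕ) : ℤ) := by push_cast; exact ⟨n, rfl⟩
    have := dvd_trans h2 hdvd
    rw [hgint] at this
    omega
  obtain ⟨A, hA⟩ := hvodd
  have hAv : (v : ℤ) = 2 * A + 1 := by linarith
  have hA0 : 0 ≤ A := by
    have : (0 : ℤ) ≤ (v : ℤ) := Int.natCast_nonneg v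
    omega
  -- A ≡ d * bmu  mod n
  have hAd : (n : ℤ) ∣ A - (d : ℤ) * bmu n d := by
    have : ((2 * n : ℕ) : ℤ) ∣ (2 * A + 1) - (2 * ((d : ℤ) * bmu n d) + 1) := by
      rw [← hAv, ← hgint]; exact hdvd
    push_cast at this
    obtain ⟨k, hk⟩ := this
    exact ⟨k, by linarith⟩
  -- gcd computation
  have hgcd1 : Int.gcd (n : ℤ) A = Int.gcd (n : ℤ) ((d : ℤ) * bmu n d) := int_gcd_congr n hAd
  have hgcd2 : Int.gcd (n : ℤ) ((d : ℤ) * bmu n d) = d := by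
    have hn' : (n : ℤ) = (d : ℤ) * (e : ℤ) := by
      exact_mod_cast (Nat.mul_div_cancel' hd).symm
    rw [hn', Int.gcd_mul_left]
    have hcop : Int.gcd (e : ℤ) (bmu n d) = 1 := by
      rw [← Int.isCoprime_iff_gcd_eq_one]
      exact ⟨bnu n d, -(d : ℤ), by linarith [hb]⟩
    simp [hcop]
  -- convert to ℕ
  have hvA : (v - 1) / 2 = A.toNat := by omega
  rw [hvA]
  have : Int.gcd (n : ℤ) A = n.gcd A.toNat := by
    rw [Int.gcd]
    congr 1
    omega
  omega
end Stmt6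
namespace Stmt6

lemma range_phi_sub {n : ℕ} (hn : n ≠ 0) (u : (ZMod (2 * n))ˣ)
    (hu : u ∈ Set.range (phi n)) :
    ∃ d : ℕ, (d ∣ n ∧ Nat.Coprime d (n / d)) ∧ gu n d = u := by
  haveI : NeZero (2 * n) := ⟨by omega⟩
  obtain ⟨M, hM⟩ := hu
  set m : ℤ := M.val.val 1 1 with hm
  obtain ⟨k, hk⟩ := sq11 hn M.2
  rw [← hm] at hk
  set v : ℕ := ((u : (ZMod (2 * n))ˣ) : ZMod (2 * n)).val with hv
  have huval : ((u : (ZMod (2 * n))ˣ) : ZMod (2 * n)) = ((m : ℤ) : ZMod (2 * n)) := by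
    rw [← hM, phi_val]; rfl
  have hcast : ((v : ℤ) : ZMod (2 * n)) = ((m : ℤ) : ZMod (2 * n)) := by
    rw [← huval, hv]
    simp [ZMod.natCast_val, ZMod.intCast_cast, ZMod.intCast_zmod_cast]
  have hdvd : ((2 * n : ℕ) : ℤ) ∣ (v : ℤ) - m := by
    rwa [← ZMod.intCast_zmod_eq_zero_iff_dvd, Int.cast_sub, sub_eq_zero]
  -- m is odd
  have hmodd : m % 2 = 1 := by
    rcases Int.emod_two_eq_zero_or_one m with h1 | h1
    · exfalso
      obtain ⟨t, ht⟩ := Int.dvd_of_emod_eq_zero h1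
      have h4 : (1 : ℤ) = 4 * (t ^ 2 - (n : ℤ) * k) := by
        rw [ht] at hk
        linear_combination -hk
      have : (4 : ℤ) ∣ 1 := ⟨t ^ 2 - (n : ℤ) * k, h4⟩
      norm_num at this
    · exact h1
  -- v = 2A+1
  have hvodd : (v : ℤ) % 2 = 1 := by
    obtain ⟨t, ht⟩ := hdvd
    have h2 : (v : ℤ) = m + 2 * ((n : ℤ) * t) := by push_cast at ht ⊢; linarith
    omega
  obtain ⟨A, hA⟩ : ∃ A : ℕ, v = 2 * A + 1 := by
    refine ⟨(v - 1) / 2, ?_⟩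
    omega
  set B : ℕ := A + 1 with hB
  -- n ∣ A * B
  have hnAB : (n : ℤ) ∣ (A : ℤ) * B := by
    obtain ⟨t, ht⟩ := hdvd
    refine ⟨k + t * m + (n : ℤ) * t ^ 2, ?_⟩
    have hvm : (v : ℤ) = m + 2 * (n : ℤ) * t := by push_cast at ht ⊢; linarith
    have hv2 : ((v : ℤ)) ^ 2 - 1 = 4 * ((A : ℤ) * B) := by
      rw [hA, hB]; push_cast; ring
    have : ((v : ℤ)) ^ 2 - 1 = 4 * ((n : ℤ) * (k + t * m + (n : ℤ) * t ^ 2)) := by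
      rw [hvm]; linear_combination hk
    linarith
  have hnABn : n ∣ A * B := by exact_mod_cast hnAB
  have hcop : Nat.Coprime A B := by simp [hB]
  set d : ℕ := n.gcd A with hd
  set e : ℕ := n.gcd B with he
  have hprod : d * e = n := by
    rw [hd, he, ← Nat.Coprime.gcd_mul n hcop, Nat.gcd_eq_left hnABn]
  have hdn : d ∣ n := Nat.gcd_dvd_left n A
  have hd0 : d ≠ 0 := by
    intro h0
    rw [h0, zero_mul] at hprod
    exact hn hprod.symm
  have hnd : n / d = e := by
    rw [← hprod, Nat.mul_div_cancel_left e (Nat.pos_of_ne_zero hd0)]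
  have hde : Nat.Coprime d e :=
    (hcop.coprime_dvd_left (Nat.gcd_dvd_right n A)).coprime_dvd_right (Nat.gcd_dvd_right n B)
  have hco : Nat.Coprime d (n / d) := by rwa [hnd]
  refine ⟨d, ⟨hdn, hco⟩, ?_⟩
  -- show gu n d = u
  apply Units.ext
  rw [gu_val hdn hco, huval, ← hcast]
  rw [ZMod.intCast_eq_intCast_iff']
  -- suffices : (2n : ℤ) ∣ gint n d - v
  have hb := bez (n := n) (d := d) hco
  rw [hnd] at hb
  have hdA : d ∣ A := Nat.gcd_dvd_right n A
  have heB : e ∣ B := Nat.gcd_dvd_right n B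
  set a : ℕ := A / d with ha
  set b' : ℕ := B / e with hb'
  have hda : (d : ℤ) * a = A := by exact_mod_cast Nat.mul_div_cancel' hdA
  have heb : (e : ℤ) * b' = B := by exact_mod_cast Nat.mul_div_cancel' heB
  have hb2 : (e : ℤ) * b' - (d : ℤ) * a = 1 := by
    rw [hda, heb, hB]; push_cast; ring
  -- e * (ν₀ - b') = d * (μ₀ - a)
  have hkey : (e : ℤ) * (bnu n d - b') = (d : ℤ) * (bmu n d - a) := by
    have := bez (n := n) (d := d) hco
    rw [hnd] at this
    ring_nf
    ring_nf at this hb2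
    linarith
  have hdX : (d : ℤ) ∣ (bnu n d - b') := by
    have hcopZ : IsCoprime (d : ℤ) (e : ℤ) := by
      rw [Int.isCoprime_iff_gcd_eq_one, Int.gcd_natCast_natCast]
      exact hde
    exact hcopZ.dvd_of_dvd_mul_left ⟨bmu n d - a, hkey⟩
  obtain ⟨w, hw⟩ := hdX
  have hgv : gint n d - (v : ℤ) = 2 * (n : ℤ) * w := by
    have hsum : (v : ℤ) = (d : ℤ) * a + (e : ℤ) * b' := by
      rw [hda, heb, hA, hB]; push_cast; ring
    have hnde : (n : ℤ) = (d : ℤ) * e := by exact_mod_cast hprod.symm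
    calc gint n d - (v : ℤ)
        = ((d : ℤ) * bmu n d - (d : ℤ) * a) + ((e : ℤ) * bnu n d - (e : ℤ) * b') := by
          rw [hsum]; unfold gint; rw [hnd]; ring
      _ = (e : ℤ) * (bnu n d - b') + (e : ℤ) * (bnu n d - b') := by
          linear_combination -hkey
      _ = 2 * (n : ℤ) * w := by rw [hw, hnde]; ring
  refine Int.modEq_iff_dvd.mpr ⟨-w, ?_⟩
  push_cast
  push_cast at hgv
  linarith

end Stmt6
namespace Stmt6

open Finset in
lemma card_unitary {n : ℕ} (hn : n ≠ 0) :
    ((n.divisors).filter (fun d => Nat.Coprime d (n / d))).card = 2 ^ n.primeFactors.card := by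
  rw [← Finset.card_powerset]
  apply Finset.card_bij' (fun d _ => d.primeFactors)
      (fun T _ => ∏ p ∈ T, p ^ n.factorization p)
  · -- hi
    intro d hd
    rw [Finset.mem_powerset]
    rw [Finset.mem_filter, Nat.mem_divisors] at hd
    exact Nat.primeFactors_mono hd.1.1 hn
  · -- hj
    intro T hT
    rw [Finset.mem_powerset] at hT
    set P := ∏ p ∈ T, p ^ n.factorization p with hP
    have hnprod : ∏ p ∈ n.primeFactors, p ^ n.factorization p = n := by
      rw [← Nat.support_factorization]
      exact Nat.factorization_prod_pow_eq_self hn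
    have hPd : P ∣ n := by
      rw [← hnprod]
      exact Finset.prod_dvd_prod_of_subset _ _ _ hT
    have hP0 : P ≠ 0 := by
      rw [hP]
      exact Finset.prod_ne_zero_iff.mpr fun p hp => by
        have hp' : p.Prime := Nat.prime_of_mem_primeFactors (hT hp)
        exact pow_ne_zero _ hp'.pos.ne'
    set Q := ∏ p ∈ n.primeFactors \ T, p ^ n.factorization p with hQ
    have hPQ : P * Q = n := by
      rw [hP, hQ, ← Finset.prod_union (Finset.disjoint_sdiff), Finset.union_sdiff_of_subset hT]
      exact hnprod
    have hQnd : n / P = Q := by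
      rw [← hPQ, Nat.mul_div_cancel_left Q (Nat.pos_of_ne_zero hP0)]
    rw [Finset.mem_filter, Nat.mem_divisors]
    refine ⟨⟨hPd, hn⟩, ?_⟩
    rw [hQnd]
    apply Nat.coprime_prod_left_iff.mpr
    intro p hp
    apply Nat.coprime_prod_right_iff.mpr
    intro q hq
    apply Nat.Coprime.pow
    have hp' : p.Prime := Nat.prime_of_mem_primeFactors (hT hp)
    have hq' : q.Prime := Nat.prime_of_mem_primeFactors (Finset.mem_sdiff.mp hq).1
    rw [Nat.coprime_primes hp' hq']
    intro hpq
    exact (Finset.mem_sdiff.mp hq).2 (hpq ▸ hp)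
  · -- left inverse
    intro d hd
    rw [Finset.mem_filter, Nat.mem_divisors] at hd
    obtain ⟨⟨hdn, _⟩, hco⟩ := hd
    have hd0 : d ≠ 0 := by
      rintro rfl
      rw [Nat.zero_dvd] at hdn
      exact hn hdn
    have hnd0 : n / d ≠ 0 := by
      intro h0
      have hmd := Nat.mul_div_cancel' hdn
      rw [h0, mul_zero] at hmd
      exact hn hmd.symm
    have hfac : ∀ p ∈ d.primeFactors, n.factorization p = d.factorization p := by
      intro p hp
      have hpd : p ∣ d := Nat.dvd_of_mem_primeFactors hp
      have hpp : p.Prime := Nat.prime_of_mem_primeFactors hp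
      have hmul : n.factorization = d.factorization + (n / d).factorization := by
        rw [← Nat.factorization_mul hd0 hnd0, Nat.mul_div_cancel' hdn]
      have hz : (n / d).factorization p = 0 := by
        by_contra hz
        have : p ∣ n / d := by
          have := Nat.support_factorization (n := n / d) ▸ Finsupp.mem_support_iff.mpr hz
          exact Nat.dvd_of_mem_primeFactors this
        have h1 : Nat.Coprime p p := (hco.coprime_dvd_left hpd).coprime_dvd_right this
        rw [Nat.Coprime, Nat.gcd_self] at h1
        exact hpp.ne_one h1
      rw [hmul]
      simp [hz]
    calc ∏ p ∈ d.primeFactors, p ^ n.factorization p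
        = ∏ p ∈ d.primeFactors, p ^ d.factorization p :=
          Finset.prod_congr rfl (fun p hp => by rw [hfac p hp])
      _ = d := by
          rw [← Nat.support_factorization]
          exact Nat.factorization_prod_pow_eq_self hd0
  · -- right inverse
    intro T hT
    rw [Finset.mem_powerset] at hT
    ext q
    constructor
    · intro hq
      have hq' : q.Prime := Nat.prime_of_mem_primeFactors hq
      have hqd : q ∣ ∏ p ∈ T, p ^ n.factorization p := Nat.dvd_of_mem_primeFactors hq
      obtain ⟨p, hpT, hqp⟩ := hq'.prime.exists_mem_finset_dvd hqd
      have hp' : p.Prime := Nat.prime_of_mem_primeFactors (hT hpT)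
      have : q = p := by
        have := hq'.dvd_of_dvd_pow hqp
        exact (Nat.prime_dvd_prime_iff_eq hq' hp').mp this
      rwa [this]
    · intro hq
      have hq' : q.Prime := Nat.prime_of_mem_primeFactors (hT hq)
      have hfq : n.factorization q ≠ 0 := by
        have := Nat.support_factorization (n := n) ▸ (hT hq)
        exact Finsupp.mem_support_iff.mp this
      have hqP : q ∣ ∏ p ∈ T, p ^ n.factorization p :=
        dvd_trans (dvd_pow_self q hfq) (Finset.dvd_prod_of_mem _ hq)
      have hP0 : (∏ p ∈ T, p ^ n.factorization p) ≠ 0 :=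
        Finset.prod_ne_zero_iff.mpr fun p hp => by
          have hp' : p.Prime := Nat.prime_of_mem_primeFactors (hT hp)
          exact pow_ne_zero _ hp'.pos.ne'
      exact Nat.mem_primeFactors.mpr ⟨hq', hqP, hP0⟩

end Stmt6
/-- For `n ≥ 1`, the subgroup `O(Σ_n)* = O(Σ_n) ∩ starSub n` has index exactly
`2^{ω(n)}` in `O(Σ_n)`, where `ω(n)` is the number of distinct prime divisors
of `n`; equivalently the natural map from `O(Σ_n)` to the orthogonal group of
the discriminant form of `U ⊕ ⟨2n⟩` is surjective with image of order
`2^{ω(n)}`. -/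
theorem stmt_6 (n : ℕ) (hn : 1 ≤ n) :
    (starSub n).relIndex (Oform n) = 2 ^ n.primeFactors.card := by
  have hn0 : n ≠ 0 := by omega
  haveI : NeZero (2 * n) := ⟨by omega⟩
  rw [Subgroup.relIndex, ← Stmt6.ker_phi, Subgroup.index_ker]
  set D := (n.divisors).filter (fun d => Nat.Coprime d (n / d)) with hD
  have hset : ((Stmt6.phi n).range : Set (ZMod (2 * n))ˣ) = (Stmt6.gu n) '' ↑D := by
    ext u
    constructor
    · intro hu
      have hu' : u ∈ Set.range (Stmt6.phi n) := hu
      obtain ⟨d, ⟨hd1, hd2⟩, hd3⟩ := Stmt6.range_phi_sub hn0 u hu'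
      refine ⟨d, ?_, hd3⟩
      rw [Finset.mem_coe, hD, Finset.mem_filter, Nat.mem_divisors]
      exact ⟨⟨hd1, hn0⟩, hd2⟩
    · rintro ⟨d, hdD, rfl⟩
      rw [Finset.mem_coe, hD, Finset.mem_filter, Nat.mem_divisors] at hdD
      exact Stmt6.gu_mem_range hdD.1.1 hdD.2
  have hcard : Nat.card (Stmt6.phi n).range = Nat.card ((Stmt6.gu n) '' (↑D : Set ℕ)) := by
    apply Nat.card_congr
    exact Equiv.setCongr hset
  rw [hcard, Nat.card_coe_set_eq, Set.ncard_image_of_injOn, Set.ncard_coe_finset]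
  · exact Stmt6.card_unitary hn0
  · intro d1 hd1 d2 hd2 heq
    rw [Finset.mem_coe, hD, Finset.mem_filter, Nat.mem_divisors] at hd1 hd2
    have e1 := Stmt6.gu_extract hn0 hd1.1.1 hd1.2
    have e2 := Stmt6.gu_extract hn0 hd2.1.1 hd2.2
    rw [← e1, ← e2, heq]
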